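/- arXiv:2605.29500 — 6 statements merged into one kernel-verified Lean document; each statement's English description precedes it below -/
import Mathlib

section
/- Under the setup of the previous statement (finite Ω, pmfs P_π ≪ P_β, map q : Ω → Z, quotient-measurable function G(ω)=g(q(ω))), the variance under P_β of ρ(ω)G(ω) minus the variance under P_β of w(q(ω))g(q(ω)) equals E_β[ g(q(ω))² · Var_β(ρ | q(ω)) ], where Var_β(ρ | q=z) is the conditional variance of ρ given the event {q=z}. In particular this difference is nonnegative (Rao–Blackwell). -/
open Finset

/-- exact variance gap on a quotient (Rao–Blackwell):
`Var_β(ρ G) − Var_β(w(q) g(q)) = E_β[g(q)² Var_β(ρ | q)] ≥ 0`. -/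
theorem stmt_3 {Ω Z : Type*} [Fintype Ω] [Fintype Z] [DecidableEq Z]
    (Pπ Pβ : Ω → ℝ)
    (hπ0 : ∀ ω, 0 ≤ Pπ ω) (hβ0 : ∀ ω, 0 ≤ Pβ ω)
    (hπ1 : ∑ ω, Pπ ω = 1) (hβ1 : ∑ ω, Pβ ω = 1)
    (hac : ∀ ω, Pβ ω = 0 → Pπ ω = 0)
    (q : Ω → Z) (g : Z → ℝ)
    (Fπ Fβ : Z → ℝ)
    (hFπ : ∀ z, Fπ z = ∑ ω ∈ univ.filter (fun ω => q ω = z), Pπ ω)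
    (hFβ : ∀ z, Fβ z = ∑ ω ∈ univ.filter (fun ω => q ω = z), Pβ ω)
    (ρ : Ω → ℝ)
    (hρ : ∀ ω, ρ ω = if Pβ ω = 0 then 0 else Pπ ω / Pβ ω)
    (w : Z → ℝ)
    (hw : ∀ z, w z = if Fβ z = 0 then 0 else Fπ z / Fβ z)
    -- expectation and variance under `Pβ`
    (E : (Ω → ℝ) → ℝ) (hE : ∀ f, E f = ∑ ω, Pβ ω * f ω)
    (V : (Ω → ℝ) → ℝ) (hV : ∀ f, V f = E (fun ω => (f ω - E f) ^ 2))
    -- conditional variance of ρ given {q = z}, for F_β(z) > 0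
    (cvar : Z → ℝ)
    (hcvar : ∀ z, 0 < Fβ z →
      cvar z =
        (∑ ω ∈ univ.filter (fun ω => q ω = z), Pβ ω * ρ ω ^ 2) / Fβ z -
        ((∑ ω ∈ univ.filter (fun ω => q ω = z), Pβ ω * ρ ω) / Fβ z) ^ 2) :
    V (fun ω => ρ ω * g (q ω)) - V (fun ω => w (q ω) * g (q ω)) =
      ∑ z ∈ univ.filter (fun z => 0 < Fβ z), Fβ z * (g z ^ 2 * cvar z) ∧
    0 ≤ V (fun ω => ρ ω * g (q ω)) - V (fun ω => w (q ω) * g (q ω)) := by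
  classical
  have hFβnn : ∀ z, 0 ≤ Fβ z := fun z => by
    rw [hFβ]; exact Finset.sum_nonneg fun ω _ => hβ0 ω
  have hβρ : ∀ ω, Pβ ω * ρ ω = Pπ ω := by
    intro ω; rw [hρ]
    by_cases h : Pβ ω = 0
    · simp [h, hac ω h]
    · rw [if_neg h]; field_simp
  have hFβ0 : ∀ z, Fβ z = 0 → ∀ ω ∈ univ.filter (fun ω => q ω = z), Pβ ω = 0 := by
    intro z hz ω hω
    exact (Finset.sum_eq_zero_iff_of_nonneg (fun ω _ => hβ0 ω)).mp ((hFβ z) ▸ hz) ω hω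
  have hFπβ : ∀ z, Fπ z = ∑ ω ∈ univ.filter (fun ω => q ω = z), Pβ ω * ρ ω := by
    intro z; rw [hFπ]; exact Finset.sum_congr rfl fun ω _ => (hβρ ω).symm
  have hFw : ∀ z, Fβ z * w z = Fπ z := by
    intro z; rw [hw]
    by_cases h : Fβ z = 0
    · simp only [h, if_pos, zero_mul]
      rw [hFπ]
      exact (Finset.sum_eq_zero fun ω hω => hac ω (hFβ0 z h ω hω)).symm
    · rw [if_neg h]; field_simp
  -- second moments over fibers
  set Q2 : Z → ℝ := fun z => ∑ ω ∈ univ.filter (fun ω => q ω = z), Pβ ω * ρ ω ^ 2 with hQ2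
  have hQ2nn : ∀ z, 0 ≤ Q2 z := fun z =>
    Finset.sum_nonneg fun ω _ => mul_nonneg (hβ0 ω) (sq_nonneg _)
  have hQ2zero : ∀ z, Fβ z = 0 → Q2 z = 0 := by
    intro z hz
    exact Finset.sum_eq_zero fun ω hω => by rw [hFβ0 z hz ω hω, zero_mul]
  -- Cauchy–Schwarz on each fiber
  have hCS : ∀ z, Fπ z ^ 2 ≤ Fβ z * Q2 z := by
    intro z
    have := Finset.sum_mul_sq_le_sq_mul_sq (univ.filter (fun ω => q ω = z))
      (fun ω => Real.sqrt (Pβ ω)) (fun ω => Real.sqrt (Pβ ω) * ρ ω)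
    calc Fπ z ^ 2
        = (∑ ω ∈ univ.filter (fun ω => q ω = z),
            Real.sqrt (Pβ ω) * (Real.sqrt (Pβ ω) * ρ ω)) ^ 2 := by
          rw [hFπβ]
          congr 1
          refine Finset.sum_congr rfl fun ω _ => ?_
          rw [← mul_assoc, Real.mul_self_sqrt (hβ0 ω)]
      _ ≤ (∑ ω ∈ univ.filter (fun ω => q ω = z), Real.sqrt (Pβ ω) ^ 2) *
          ∑ ω ∈ univ.filter (fun ω => q ω = z), (Real.sqrt (Pβ ω) * ρ ω) ^ 2 := this
      _ = Fβ z * Q2 z := by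
          rw [hFβ, hQ2]
          congr 1
          · exact Finset.sum_congr rfl fun ω _ => Real.sq_sqrt (hβ0 ω)
          · refine Finset.sum_congr rfl fun ω _ => ?_
            rw [mul_pow, Real.sq_sqrt (hβ0 ω)]
  -- means are equal
  have hmean : E (fun ω => ρ ω * g (q ω)) = E (fun ω => w (q ω) * g (q ω)) := by
    rw [hE, hE, ← Finset.sum_fiberwise univ q (fun ω => Pβ ω * (ρ ω * g (q ω))),
      ← Finset.sum_fiberwise univ q (fun ω => Pβ ω * (w (q ω) * g (q ω)))]
    refine Finset.sum_congr rfl fun z _ => ?_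
    have h1 : ∑ ω ∈ univ.filter (fun ω => q ω = z), Pβ ω * (ρ ω * g (q ω))
        = Fπ z * g z := by
      rw [hFπβ, Finset.sum_mul]
      refine Finset.sum_congr rfl fun ω hω => ?_
      have : q ω = z := (Finset.mem_filter.mp hω).2
      rw [this]; ring
    have h2 : ∑ ω ∈ univ.filter (fun ω => q ω = z), Pβ ω * (w (q ω) * g (q ω))
        = Fβ z * w z * g z := by
      rw [hFβ, Finset.sum_mul, Finset.sum_mul]
      refine Finset.sum_congr rfl fun ω hω => ?_
      have : q ω = z := (Finset.mem_filter.mp hω).2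
      rw [this]; ring
    rw [h1, h2, hFw]
  -- second moments
  have hsm1 : E (fun ω => (ρ ω * g (q ω)) ^ 2) = ∑ z, Q2 z * g z ^ 2 := by
    rw [hE, ← Finset.sum_fiberwise univ q (fun ω => Pβ ω * (ρ ω * g (q ω)) ^ 2)]
    refine Finset.sum_congr rfl fun z _ => ?_
    rw [hQ2, Finset.sum_mul]
    refine Finset.sum_congr rfl fun ω hω => ?_
    have : q ω = z := (Finset.mem_filter.mp hω).2
    rw [this]; ring
  have hsm2 : E (fun ω => (w (q ω) * g (q ω)) ^ 2) = ∑ z, Fβ z * (w z * g z) ^ 2 := by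
    rw [hE, ← Finset.sum_fiberwise univ q (fun ω => Pβ ω * (w (q ω) * g (q ω)) ^ 2)]
    refine Finset.sum_congr rfl fun z _ => ?_
    rw [hFβ, Finset.sum_mul]
    refine Finset.sum_congr rfl fun ω hω => ?_
    have : q ω = z := (Finset.mem_filter.mp hω).2
    rw [this]
  -- variance in terms of moments
  have hVar : ∀ f : Ω → ℝ, V f = E (fun ω => (f ω) ^ 2) - (E f) ^ 2 := by
    intro f
    rw [hV, hE, hE, hE]
    have : ∑ ω, Pβ ω * (f ω - ∑ x, Pβ x * f x) ^ 2
        = ∑ ω, (Pβ ω * f ω ^ 2 - 2 * (Pβ ω * f ω) * (∑ x, Pβ x * f x)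
            + Pβ ω * (∑ x, Pβ x * f x) ^ 2) := by
      refine Finset.sum_congr rfl fun ω _ => ?_; ring
    rw [this, Finset.sum_add_distrib, Finset.sum_sub_distrib, ← Finset.sum_mul,
      ← Finset.sum_mul, hβ1]
    have h2 : ∑ i, 2 * (Pβ i * f i) = 2 * ∑ i, Pβ i * f i := by
      rw [Finset.mul_sum]
    rw [h2]; ring
  -- the termwise identity
  have hterm : ∀ z, Q2 z * g z ^ 2 - Fβ z * (w z * g z) ^ 2
      = if 0 < Fβ z then Fβ z * (g z ^ 2 * cvar z) else 0 := by
    intro z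
    by_cases h : 0 < Fβ z
    · have hq : (∑ ω ∈ univ.filter (fun ω => q ω = z), Pβ ω * ρ ω ^ 2) = Q2 z := rfl
      rw [if_pos h, hcvar z h, ← hFπβ z, hq]
      have hne : Fβ z ≠ 0 := ne_of_gt h
      rw [hw, if_neg hne]
      field_simp
    · have hz : Fβ z = 0 := le_antisymm (not_lt.mp h) (hFβnn z)
      rw [if_neg h, hz, hQ2zero z hz]
      ring
  have hgap : V (fun ω => ρ ω * g (q ω)) - V (fun ω => w (q ω) * g (q ω))
      = ∑ z ∈ univ.filter (fun z => 0 < Fβ z), Fβ z * (g z ^ 2 * cvar z) := by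
    rw [hVar, hVar, hsm1, hsm2, hmean, Finset.sum_filter]
    have : ∑ z, Q2 z * g z ^ 2 - (E fun ω => w (q ω) * g (q ω)) ^ 2
        - (∑ z, Fβ z * (w z * g z) ^ 2 - (E fun ω => w (q ω) * g (q ω)) ^ 2)
        = ∑ z, (Q2 z * g z ^ 2 - Fβ z * (w z * g z) ^ 2) := by
      rw [Finset.sum_sub_distrib]; ring
    rw [this]
    exact Finset.sum_congr rfl fun z _ => hterm z
  refine ⟨hgap, ?_⟩
  rw [hgap]
  refine Finset.sum_nonneg fun z hz => ?_
  have h : 0 < Fβ z := (Finset.mem_filter.mp hz).2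
  have hcv : 0 ≤ cvar z := by
    have hq : (∑ ω ∈ univ.filter (fun ω => q ω = z), Pβ ω * ρ ω ^ 2) = Q2 z := rfl
    rw [hcvar z h, ← hFπβ z, hq, div_pow, sub_nonneg, div_le_div_iff₀ (by positivity) (by positivity)]
    calc Fπ z ^ 2 * Fβ z ≤ Fβ z * Q2 z * Fβ z :=
          mul_le_mul_of_nonneg_right (hCS z) (hFβnn z)
      _ = Q2 z * Fβ z ^ 2 := by ring
  positivity
end

section
/- Let Ω be a finite set, P_π ≪ P_β pmfs, q : Ω → Z, g : Z → ℝ. For each z with F_β(z)>0 define conditional pmfs P_μ(·|z)(ω) = P_μ(ω)·1{q(ω)=z}/F_μ(z) (when F_μ(z)>0). Then the variance gap Var_β(ρG) − Var_β(w(q)g(q)) equals Σ_{z : F_β(z)>0} F_β(z) g(z)² w(z)² χ²(P_π(·|z) ∥ P_β(·|z)), where χ²(P∥Q) = Σ_ω Q(ω)(P(ω)/Q(ω) − 1)² and w(z)=F_π(z)/F_β(z). (Classes z with F_π(z)=0 contribute zero since w(z)=0.) -/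
open Finset

/-- chi-square form of the variance gap:
`Var_β(ρG) − Var_β(w(q)g(q)) = Σ_{z : F_β(z)>0} F_β(z) g(z)² w(z)² χ²(P_π(·|z) ∥ P_β(·|z))`. -/
theorem stmt_4 {Ω Z : Type*} [Fintype Ω] [Fintype Z] [DecidableEq Z]
    (Pπ Pβ : Ω → ℝ)
    (hπ0 : ∀ ω, 0 ≤ Pπ ω) (hβ0 : ∀ ω, 0 ≤ Pβ ω)
    (hπ1 : ∑ ω, Pπ ω = 1) (hβ1 : ∑ ω, Pβ ω = 1)
    (hac : ∀ ω, Pβ ω = 0 → Pπ ω = 0)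
    (q : Ω → Z) (g : Z → ℝ)
    (Fπ Fβ : Z → ℝ)
    (hFπ : ∀ z, Fπ z = ∑ ω ∈ univ.filter (fun ω => q ω = z), Pπ ω)
    (hFβ : ∀ z, Fβ z = ∑ ω ∈ univ.filter (fun ω => q ω = z), Pβ ω)
    (ρ : Ω → ℝ)
    (hρ : ∀ ω, ρ ω = if Pβ ω = 0 then 0 else Pπ ω / Pβ ω)
    (w : Z → ℝ)
    (hw : ∀ z, w z = if Fβ z = 0 then 0 else Fπ z / Fβ z)
    -- expectation and variance under `Pβ`
    (E : (Ω → ℝ) → ℝ) (hE : ∀ f, E f = ∑ ω, Pβ ω * f ω)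
    (V : (Ω → ℝ) → ℝ) (hV : ∀ f, V f = E (fun ω => (f ω - E f) ^ 2))
    -- conditional pmfs given {q = z}
    (Pπc Pβc : Z → Ω → ℝ)
    (hPπc : ∀ z ω, 0 < Fπ z →
      Pπc z ω = (if q ω = z then Pπ ω else 0) / Fπ z)
    (hPβc : ∀ z ω, 0 < Fβ z →
      Pβc z ω = (if q ω = z then Pβ ω else 0) / Fβ z)
    -- chi-square divergence between pmfs, terms with zero denominator vanish
    (chi2 : (Ω → ℝ) → (Ω → ℝ) → ℝ)
    (hchi2 : ∀ P Q, chi2 P Q =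
      ∑ ω ∈ univ.filter (fun ω => Q ω ≠ 0), Q ω * (P ω / Q ω - 1) ^ 2) :
    V (fun ω => ρ ω * g (q ω)) - V (fun ω => w (q ω) * g (q ω)) =
      ∑ z ∈ univ.filter (fun z => 0 < Fβ z),
        Fβ z * g z ^ 2 * w z ^ 2 * chi2 (Pπc z) (Pβc z) := by
  classical
  -- basic facts
  have hβρ : ∀ ω, Pβ ω * ρ ω = Pπ ω := by
    intro ω
    rw [hρ]
    by_cases h : Pβ ω = 0
    · simp [h, hac ω h]
    · rw [if_neg h]; field_simp
  have hFβ0 : ∀ z, 0 ≤ Fβ z := fun z => by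
    rw [hFβ]; exact Finset.sum_nonneg fun ω _ => hβ0 ω
  have hFπ0 : ∀ z, 0 ≤ Fπ z := fun z => by
    rw [hFπ]; exact Finset.sum_nonneg fun ω _ => hπ0 ω
  have hβfib : ∀ z, Fβ z = 0 → ∀ ω, q ω = z → Pβ ω = 0 := by
    intro z hz ω hω
    have := (Finset.sum_eq_zero_iff_of_nonneg (fun ω _ => hβ0 ω)).mp ((hFβ z).symm.trans hz)
    exact this ω (by simp [hω])
  have hπfib : ∀ z, Fπ z = 0 → ∀ ω, q ω = z → Pπ ω = 0 := by
    intro z hz ω hω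
    have := (Finset.sum_eq_zero_iff_of_nonneg (fun ω _ => hπ0 ω)).mp ((hFπ z).symm.trans hz)
    exact this ω (by simp [hω])
  have hFac : ∀ z, Fβ z = 0 → Fπ z = 0 := by
    intro z hz
    rw [hFπ]
    exact Finset.sum_eq_zero fun ω hω => hac ω (hβfib z hz ω (by simpa using hω))
  have hFw : ∀ z, Fβ z * w z = Fπ z := by
    intro z
    rw [hw]
    by_cases h : Fβ z = 0
    · simp [h, hFac z h]
    · rw [if_neg h]; field_simp
  -- fiberwise decomposition of sums over Ω
  have hfib : ∀ (f : Ω → ℝ), ∑ ω, f ω = ∑ z, ∑ ω ∈ univ.filter (fun ω => q ω = z), f ω :=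
    fun f => (Finset.sum_fiberwise_of_maps_to (fun i _ => mem_univ (q i)) f).symm
  -- equal means
  set m : ℝ := ∑ ω, Pπ ω * g (q ω) with hm
  have hE1 : E (fun ω => ρ ω * g (q ω)) = m := by
    rw [hE, hm]
    exact Finset.sum_congr rfl fun ω _ => by rw [← mul_assoc, hβρ]
  have hfibconst : ∀ (P : Ω → ℝ) (c : Z → ℝ),
      ∑ ω, P ω * c (q ω) = ∑ z, (∑ ω ∈ univ.filter (fun ω => q ω = z), P ω) * c z := by
    intro P c
    rw [hfib (fun ω => P ω * c (q ω))]
    refine Finset.sum_congr rfl fun z _ => ?_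
    rw [Finset.sum_mul]
    exact Finset.sum_congr rfl fun ω hω => by rw [(mem_filter.mp hω).2]
  have hE2 : E (fun ω => w (q ω) * g (q ω)) = m := by
    rw [hE, hm]
    have h1 : ∑ ω, Pβ ω * (w (q ω) * g (q ω)) = ∑ z, Fβ z * (w z * g z) := by
      rw [hfibconst Pβ (fun z => w z * g z)]
      exact Finset.sum_congr rfl fun z _ => by rw [hFβ]
    have h2 : ∑ ω, Pπ ω * g (q ω) = ∑ z, Fπ z * g z := by
      rw [hfibconst Pπ g]
      exact Finset.sum_congr rfl fun z _ => by rw [hFπ]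
    rw [h1, h2]
    exact Finset.sum_congr rfl fun z _ => by rw [← hFw z]; ring
  -- variance formula
  have hVar : ∀ f : Ω → ℝ, V f = (∑ ω, Pβ ω * f ω ^ 2) - (E f) ^ 2 := by
    intro f
    have hEf : E f = ∑ ω, Pβ ω * f ω := hE f
    rw [hV, hE]
    have hexp : ∀ ω, Pβ ω * (f ω - E f) ^ 2
        = Pβ ω * f ω ^ 2 - 2 * E f * (Pβ ω * f ω) + (E f) ^ 2 * Pβ ω := by
      intro ω; ring
    simp only [hexp, Finset.sum_add_distrib, Finset.sum_sub_distrib, ← Finset.mul_sum,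
      hβ1, ← hEf]
    ring
  -- cross term identity
  have hcross : ∑ ω, Pβ ω * (ρ ω * g (q ω) * (w (q ω) * g (q ω)))
      = ∑ ω, Pβ ω * (w (q ω) * g (q ω)) ^ 2 := by
    have h1 : ∑ ω, Pβ ω * (ρ ω * g (q ω) * (w (q ω) * g (q ω)))
        = ∑ ω, Pπ ω * (g (q ω) * (w (q ω) * g (q ω))) := by
      refine Finset.sum_congr rfl fun ω _ => ?_
      rw [← hβρ ω]; ring
    have h2 : ∑ ω, Pβ ω * (w (q ω) * g (q ω)) ^ 2
        = ∑ ω, Pβ ω * ((w (q ω) * g (q ω)) ^ 2) := rfl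
    rw [h1, hfibconst Pπ (fun z => g z * (w z * g z)), h2,
      hfibconst Pβ (fun z => (w z * g z) ^ 2)]
    refine Finset.sum_congr rfl fun z _ => ?_
    rw [← hFπ, ← hFβ, ← hFw z]
    ring
  -- variance gap as a single sum
  have hgap : V (fun ω => ρ ω * g (q ω)) - V (fun ω => w (q ω) * g (q ω))
      = ∑ ω, Pβ ω * g (q ω) ^ 2 * (ρ ω - w (q ω)) ^ 2 := by
    rw [hVar, hVar, hE1, hE2]
    have hexp : ∀ ω, Pβ ω * g (q ω) ^ 2 * (ρ ω - w (q ω)) ^ 2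
        = Pβ ω * (ρ ω * g (q ω)) ^ 2
          - 2 * (Pβ ω * (ρ ω * g (q ω) * (w (q ω) * g (q ω))))
          + Pβ ω * (w (q ω) * g (q ω)) ^ 2 := by
      intro ω; ring
    simp only [hexp, Finset.sum_add_distrib, Finset.sum_sub_distrib, ← Finset.mul_sum,
      hcross]
    ring
  rw [hgap, hfib (fun ω => Pβ ω * g (q ω) ^ 2 * (ρ ω - w (q ω)) ^ 2)]
  -- restrict the outer sum to z with 0 < Fβ z
  rw [← Finset.sum_subset (Finset.filter_subset (fun z => 0 < Fβ z) univ)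
    (by
      intro z _ hz
      simp only [mem_filter, mem_univ, true_and, not_lt] at hz
      have hz0 : Fβ z = 0 := le_antisymm hz (hFβ0 z)
      refine Finset.sum_eq_zero fun ω hω => ?_
      have hq : q ω = z := by simpa using (mem_filter.mp hω)
      rw [hβfib z hz0 ω hq]; ring)]
  refine Finset.sum_congr rfl fun z hz => ?_
  have hzpos : 0 < Fβ z := by simpa using (mem_filter.mp hz)
  have hzne : Fβ z ≠ 0 := ne_of_gt hzpos
  -- rewrite the inner sum using g z, w z
  have hinner : ∑ ω ∈ univ.filter (fun ω => q ω = z), Pβ ω * g (q ω) ^ 2 * (ρ ω - w (q ω)) ^ 2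
      = ∑ ω ∈ univ.filter (fun ω => q ω = z), Pβ ω * g z ^ 2 * (ρ ω - w z) ^ 2 := by
    refine Finset.sum_congr rfl fun ω hω => ?_
    rw [(mem_filter.mp hω).2]
  rw [hinner]
  by_cases hπz : Fπ z = 0
  · -- w z = 0 and ρ = 0 on the fiber
    have hwz : w z = 0 := by rw [hw, if_neg hzne, hπz, zero_div]
    have hsum0 : ∑ ω ∈ univ.filter (fun ω => q ω = z), Pβ ω * g z ^ 2 * (ρ ω - w z) ^ 2 = 0 := by
      refine Finset.sum_eq_zero fun ω hω => ?_
      have hq : q ω = z := (mem_filter.mp hω).2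
      have hπω : Pπ ω = 0 := hπfib z hπz ω hq
      have hρω : ρ ω = 0 := by
        rw [hρ]; by_cases h : Pβ ω = 0
        · simp [h]
        · simp [h, hπω]
      rw [hρω, hwz]; ring
    rw [hsum0, hwz]; ring
  · have hπpos : 0 < Fπ z := lt_of_le_of_ne (hFπ0 z) (Ne.symm hπz)
    have hwz : w z = Fπ z / Fβ z := by rw [hw, if_neg hzne]
    -- identify the chi2 filter set
    have hset : univ.filter (fun ω => Pβc z ω ≠ 0)
        = univ.filter (fun ω => q ω = z ∧ Pβ ω ≠ 0) := by
      ext ω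
      simp only [mem_filter, mem_univ, true_and]
      rw [hPβc z ω hzpos]
      constructor
      · intro h
        by_cases hq : q ω = z
        · refine ⟨hq, fun hβ => h ?_⟩
          rw [if_pos hq, hβ, zero_div]
        · exact absurd (by rw [if_neg hq, zero_div]) h
      · rintro ⟨hq, hβ⟩
        rw [if_pos hq]
        exact div_ne_zero hβ hzne
    rw [hchi2, hset]
    rw [Finset.mul_sum]
    -- restrict the fiber sum to ω with Pβ ω ≠ 0
    have hsub : (univ.filter (fun ω => q ω = z ∧ Pβ ω ≠ 0))
        ⊆ univ.filter (fun ω => q ω = z) := by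
      intro ω hω
      simp only [mem_filter, mem_univ, true_and] at hω ⊢
      exact hω.1
    rw [← Finset.sum_subset hsub
      (by
        intro ω hω1 hω2
        simp only [mem_filter, mem_univ, true_and, not_and, not_not] at hω2
        have hq : q ω = z := by simpa using (mem_filter.mp hω1)
        rw [hω2 hq]; ring)]
    refine Finset.sum_congr rfl fun ω hω => ?_
    obtain ⟨hq, hβne⟩ : q ω = z ∧ Pβ ω ≠ 0 := by
      simpa using (mem_filter.mp hω)
    rw [hPβc z ω hzpos, hPπc z ω hπpos, if_pos hq, if_pos hq, hρ, if_neg hβne, hwz]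
    have hπzne : Fπ z ≠ 0 := ne_of_gt hπpos
    field_simp
end

section
/- Let X, W, R be random variables on a finite probability space with R² integrable, and suppose E[ρ | X] = W where W is X-measurable (a function of X) and R is conditionally independent of ρ given X with E[R | X, ρ] = E[R | X]. Then E[(ρ R − W R)² ] = E[ R'² · Var(ρ | X) ] where R'² = E[R² | X]; equivalently, Var(ρR) − Var(WR) = E[E[R²|X] · Var(ρ|X)]. -/
open Finset

/-- ordering-nuisance variance gap. If `E[ρ | X] = W(X)` and `R`
is conditionally independent of `ρ` given `X`, then
`E[(ρR − W(X)R)²] = E[E[R²|X]·Var(ρ|X)]` and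
`Var(ρR) − Var(W(X)R) = E[E[R²|X]·Var(ρ|X)]`. -/
theorem stmt_11 {Ω 𝒳 : Type*} [Fintype Ω] [Fintype 𝒳] [DecidableEq 𝒳]
    (P : Ω → ℝ) (hP0 : ∀ ω, 0 ≤ P ω) (hP1 : ∑ ω, P ω = 1)
    (X : Ω → 𝒳) (ρ R : Ω → ℝ) (hρ0 : ∀ ω, 0 ≤ ρ ω)
    (W : 𝒳 → ℝ)
    -- expectation under P
    (E : (Ω → ℝ) → ℝ) (hE : ∀ f, E f = ∑ ω, P ω * f ω)
    -- variance under P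
    (V : (Ω → ℝ) → ℝ) (hV : ∀ f, V f = E (fun ω => (f ω - E f) ^ 2))
    -- mass of each fiber of X
    (m : 𝒳 → ℝ) (hm : ∀ x, m x = ∑ ω ∈ univ.filter (fun ω => X ω = x), P ω)
    -- conditional expectation given {X = x}
    (cE : (Ω → ℝ) → 𝒳 → ℝ)
    (hcE : ∀ f x, cE f x =
      (∑ ω ∈ univ.filter (fun ω => X ω = x), P ω * f ω) / m x)
    -- E[ρ | X] = W(X)
    (hW : ∀ x, 0 < m x → cE ρ x = W x)
    -- conditional independence of ρ and R given X
    (hindep : ∀ x, 0 < m x → ∀ f g : ℝ → ℝ,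
      cE (fun ω => f (ρ ω) * g (R ω)) x = cE (fun ω => f (ρ ω)) x * cE (fun ω => g (R ω)) x) :
    E (fun ω => (ρ ω * R ω - W (X ω) * R ω) ^ 2) =
      ∑ x ∈ univ.filter (fun x => 0 < m x),
        m x * (cE (fun ω => R ω ^ 2) x *
          (cE (fun ω => ρ ω ^ 2) x - (cE ρ x) ^ 2)) ∧
    V (fun ω => ρ ω * R ω) - V (fun ω => W (X ω) * R ω) =
      ∑ x ∈ univ.filter (fun x => 0 < m x),
        m x * (cE (fun ω => R ω ^ 2) x *
          (cE (fun ω => ρ ω ^ 2) x - (cE ρ x) ^ 2)) := by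

  classical
  -- nonneg of fiber sums
  have hPzero : ∀ x, ¬ 0 < m x → ∀ ω ∈ univ.filter (fun ω => X ω = x), P ω = 0 := by
    intro x hx ω hω
    have hm0 : m x = 0 := le_antisymm (not_lt.1 hx) (by
      rw [hm]; exact Finset.sum_nonneg fun ω _ => hP0 ω)
    have := (Finset.sum_eq_zero_iff_of_nonneg (fun ω _ => hP0 ω)).1 (hm x ▸ hm0)
    exact this ω hω
  -- tower rule
  have key : ∀ f : Ω → ℝ, E f = ∑ x ∈ univ.filter (fun x => 0 < m x), m x * cE f x := by
    intro f
    rw [hE, ← Finset.sum_fiberwise univ X (fun ω => P ω * f ω)]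
    rw [← Finset.sum_subset (Finset.filter_subset (fun x => 0 < m x) univ)
      (fun x _ hx => Finset.sum_eq_zero fun ω hω => by
        rw [hPzero x (by simpa using hx) ω hω, zero_mul])]
    refine Finset.sum_congr rfl fun x hx => ?_
    have hx' : m x ≠ 0 := (Finset.mem_filter.1 hx).2.ne'
    rw [hcE, mul_div_cancel₀ _ hx']
  -- cE respects equality on the fiber
  have ccongr : ∀ (f g : Ω → ℝ) x, (∀ ω, X ω = x → f ω = g ω) → cE f x = cE g x := by
    intro f g x h
    rw [hcE, hcE]
    congr 1
    exact Finset.sum_congr rfl fun ω hω => by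
      rw [h ω (Finset.mem_filter.1 hω).2]
  -- cE of constant multiple
  have cconst : ∀ (c : ℝ) (h : Ω → ℝ) x, cE (fun ω => c * h ω) x = c * cE h x := by
    intro c h x
    rw [hcE, hcE, ← mul_div_assoc, Finset.mul_sum]
    congr 1
    exact Finset.sum_congr rfl fun ω _ => by ring
  -- expansion of conditional second moment of (ρ - c)
  have lin : ∀ (c : ℝ) x, 0 < m x →
      cE (fun ω => (ρ ω - c) ^ 2) x
        = cE (fun ω => ρ ω ^ 2) x - 2 * c * cE ρ x + c ^ 2 := by
    intro c x hx
    have h1 : ∑ ω ∈ univ.filter (fun ω => X ω = x), P ω * (ρ ω - c) ^ 2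
        = (∑ ω ∈ univ.filter (fun ω => X ω = x), P ω * ρ ω ^ 2)
          - 2 * c * (∑ ω ∈ univ.filter (fun ω => X ω = x), P ω * ρ ω)
          + c ^ 2 * (∑ ω ∈ univ.filter (fun ω => X ω = x), P ω) := by
      rw [Finset.sum_congr rfl (fun ω _ => (by ring :
        P ω * (ρ ω - c) ^ 2 = P ω * ρ ω ^ 2 - 2 * c * (P ω * ρ ω) + c ^ 2 * P ω)),
        Finset.sum_add_distrib, Finset.sum_sub_distrib, ← Finset.mul_sum, ← Finset.mul_sum]
    rw [hcE, hcE, hcE, h1, ← hm]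
    field_simp
  -- variance formula
  have Vsq : ∀ f, V f = E (fun ω => f ω ^ 2) - (E f) ^ 2 := by
    intro f
    rw [hV, hE, hE, hE]
    have h1 : ∑ ω, P ω * (f ω - (∑ ω, P ω * f ω)) ^ 2
        = (∑ ω, P ω * f ω ^ 2) - 2 * (∑ ω, P ω * f ω) * (∑ ω, P ω * f ω)
          + (∑ ω, P ω * f ω) ^ 2 * (∑ ω, P ω) := by
      rw [Finset.sum_congr rfl (fun ω _ => (by ring :
        P ω * (f ω - (∑ ω, P ω * f ω)) ^ 2 = P ω * f ω ^ 2
          - 2 * (∑ ω, P ω * f ω) * (P ω * f ω) + (∑ ω, P ω * f ω) ^ 2 * P ω)),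
        Finset.sum_add_distrib, Finset.sum_sub_distrib, ← Finset.mul_sum, ← Finset.mul_sum]
    rw [h1, hP1]
    ring
  -- per-fiber facts
  have fA : ∀ x, 0 < m x →
      cE (fun ω => (ρ ω * R ω - W (X ω) * R ω) ^ 2) x
        = cE (fun ω => R ω ^ 2) x * (cE (fun ω => ρ ω ^ 2) x - (cE ρ x) ^ 2) := by
    intro x hx
    have h1 : cE (fun ω => (ρ ω * R ω - W (X ω) * R ω) ^ 2) x
        = cE (fun ω => (fun t => (t - W x) ^ 2) (ρ ω) * (fun t => t ^ 2) (R ω)) x :=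
      ccongr _ _ x (fun ω hω => by simp only [hω]; ring)
    rw [h1, hindep x hx (fun t => (t - W x) ^ 2) (fun t => t ^ 2)]
    have h2 : cE (fun ω => (ρ ω - W x) ^ 2) x
        = cE (fun ω => ρ ω ^ 2) x - (cE ρ x) ^ 2 := by
      rw [lin (W x) x hx, hW x hx]; ring
    simp only [h2]
    ring
  have fB : ∀ x, 0 < m x →
      cE (fun ω => (ρ ω * R ω) ^ 2) x - cE (fun ω => (W (X ω) * R ω) ^ 2) x
        = cE (fun ω => (ρ ω * R ω - W (X ω) * R ω) ^ 2) x := by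
    intro x hx
    have h1 : cE (fun ω => (ρ ω * R ω) ^ 2) x
        = cE (fun ω => (fun t => t ^ 2) (ρ ω) * (fun t => t ^ 2) (R ω)) x :=
      ccongr _ _ x (fun ω _ => by ring)
    have h2 : cE (fun ω => (W (X ω) * R ω) ^ 2) x
        = cE (fun ω => (W x) ^ 2 * R ω ^ 2) x :=
      ccongr _ _ x (fun ω hω => by rw [hω]; ring)
    rw [h1, h2, hindep x hx (fun t => t ^ 2) (fun t => t ^ 2), cconst, fA x hx, hW x hx]
    ring
  have fC : ∀ x, 0 < m x →
      cE (fun ω => ρ ω * R ω) x = cE (fun ω => W (X ω) * R ω) x := by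
    intro x hx
    have h1 : cE (fun ω => ρ ω * R ω) x
        = cE (fun ω => (fun t => t) (ρ ω) * (fun t => t) (R ω)) x := rfl
    have h2 : cE (fun ω => W (X ω) * R ω) x = cE (fun ω => W x * R ω) x :=
      ccongr _ _ x (fun ω hω => by rw [hω])
    rw [h1, h2, hindep x hx (fun t => t) (fun t => t), cconst, hW x hx]
  -- part 1
  have part1 : E (fun ω => (ρ ω * R ω - W (X ω) * R ω) ^ 2)
      = ∑ x ∈ univ.filter (fun x => 0 < m x),
          m x * (cE (fun ω => R ω ^ 2) x *
            (cE (fun ω => ρ ω ^ 2) x - (cE ρ x) ^ 2)) := by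
    rw [key]
    exact Finset.sum_congr rfl fun x hx => by
      rw [fA x (Finset.mem_filter.1 hx).2]
  refine ⟨part1, ?_⟩
  have hEE : E (fun ω => ρ ω * R ω) = E (fun ω => W (X ω) * R ω) := by
    rw [key, key]
    exact Finset.sum_congr rfl fun x hx => by
      rw [fC x (Finset.mem_filter.1 hx).2]
  have hsq : E (fun ω => (ρ ω * R ω) ^ 2) - E (fun ω => (W (X ω) * R ω) ^ 2)
      = E (fun ω => (ρ ω * R ω - W (X ω) * R ω) ^ 2) := by
    rw [key (fun ω => (ρ ω * R ω) ^ 2), key (fun ω => (W (X ω) * R ω) ^ 2),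
      key (fun ω => (ρ ω * R ω - W (X ω) * R ω) ^ 2), ← Finset.sum_sub_distrib]
    exact Finset.sum_congr rfl fun x hx => by
      rw [← mul_sub, fB x (Finset.mem_filter.1 hx).2]
  rw [Vsq, Vsq, hEE, ← part1, ← hsq]
  ring
end

section
/- Fix integers 0 < K < M and a K-element subset S_K of {1,…,M}. Consider deterministic algorithms that, given oracle access to the next-item distributions μ(·|S) of an arbitrary set-sufficient policy at subsets S ⊆ {1,…,M}, must output the exact value μ(S_K). If such an algorithm fails to query some proper subset U ⊊ S_K, then there exist two set-sufficient policies μ₁, μ₂ that agree on all subsets other than U but satisfy μ₁(S_K) ≠ μ₂(S_K). Hence every exact deterministic algorithm must query all 2^K − 1 proper subsets of S_K in the worst case. -/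
open Finset

/-- Probability of generating the ordered sequence `σ` under the
set-sufficient policy `μ`. -/
noncomputable def seqProb {M : ℕ} (μ : Finset (Fin M) → Fin M → ℝ)
    {k : ℕ} (σ : Fin k → Fin M) : ℝ :=
  ∏ t : Fin k, μ ((univ.filter (fun u : Fin k => u < t)).image σ) (σ t)

/-- Unordered slate propensity. -/
noncomputable def setProb {M : ℕ} (μ : Finset (Fin M) → Fin M → ℝ)
    (S : Finset (Fin M)) : ℝ :=
  ∑ σ ∈ (univ : Finset (Fin S.card → Fin M)).filter
      (fun σ => univ.image σ = S),
    seqProb μ σ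

/-- A set-sufficient policy: at each picked set `S` of size `< K`, a pmf on the
remaining items. -/
def IsSetSufficientPolicy {M : ℕ} (K : ℕ)
    (μ : Finset (Fin M) → Fin M → ℝ) : Prop :=
  ∀ S : Finset (Fin M), S.card < K →
    (∀ a, 0 ≤ μ S a) ∧ (∑ a ∈ Sᶜ, μ S a = 1)

/-- The deterministic "next item" map associated to a list `l`: on the set of
the first `m` items of `l` it picks the `m`-th item of `l`; elsewhere it picks
the least unpicked item. -/
noncomputable def nxt {M : ℕ} (hM : 0 < M) (l : List (Fin M))
    (S : Finset (Fin M)) : Fin M :=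
  if S = (l.take S.card).toFinset ∧ S.card < l.length then l.getD S.card ⟨0, hM⟩
  else if h : Sᶜ.Nonempty then Sᶜ.min' h else ⟨0, hM⟩

/-- Indicator (deterministic) policy of a next-item map. -/
noncomputable def indPol {M : ℕ} (g : Finset (Fin M) → Fin M) :
    Finset (Fin M) → Fin M → ℝ :=
  fun S x => if x = g S then (1 : ℝ) else 0

lemma toFinset_take_card {M : ℕ} {l : List (Fin M)} (hnd : l.Nodup)
    {m : ℕ} (hm : m ≤ l.length) : (l.take m).toFinset.card = m := by
  rw [List.toFinset_card_of_nodup (hnd.sublist (List.take_sublist m l))]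
  simp [hm]

lemma getD_not_mem_take {M : ℕ} {l : List (Fin M)} (hnd : l.Nodup)
    {m : ℕ} (hm : m < l.length) (d : Fin M) :
    l.getD m d ∉ (l.take m).toFinset := by
  have h1 : l.take (m+1) = l.take m ++ [l[m]] := by
    rw [List.take_succ, List.getElem?_eq_getElem hm]; rfl
  have h2 : (l.take (m+1)).Nodup := hnd.sublist (List.take_sublist _ l)
  rw [h1] at h2
  have := (List.nodup_append'.mp h2).2.2
  rw [List.getD_eq_getElem l d hm, List.mem_toFinset]
  intro hmem
  exact this hmem (by simp)

lemma nxt_take {M : ℕ} (hM : 0 < M) {l : List (Fin M)} (hnd : l.Nodup)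
    {m : ℕ} (hm : m < l.length) :
    nxt hM l ((l.take m).toFinset) = l.getD m ⟨0, hM⟩ := by
  have hc := toFinset_take_card hnd (le_of_lt hm)
  rw [nxt, if_pos]
  · rw [hc]
  · rw [hc]; exact ⟨rfl, hm⟩

lemma nxt_not_mem {M : ℕ} (hM : 0 < M) {l : List (Fin M)} (hnd : l.Nodup)
    (hlM : l.length < M) (S : Finset (Fin M)) (hS : S.card < l.length) :
    nxt hM l S ∉ S := by
  have hne : Sᶜ.Nonempty := by
    rw [← Finset.card_pos, Finset.card_compl, Fintype.card_fin]
    have := (Finset.card_le_univ S).trans_eq (Finset.card_univ.trans (Fintype.card_fin M))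
    omega
  rw [nxt]
  by_cases hcond : S = (l.take S.card).toFinset ∧ S.card < l.length
  · rw [if_pos hcond]
    obtain ⟨h1, h2⟩ := hcond
    intro hmem
    refine getD_not_mem_take hnd h2 ⟨0, hM⟩ ?_
    rw [← h1]
    exact hmem
  · rw [if_neg hcond, dif_pos hne]
    have := Sᶜ.min'_mem hne
    simpa using this

lemma seqProb_indPol {M k : ℕ} (g : Finset (Fin M) → Fin M) (σ : Fin k → Fin M) :
    seqProb (indPol g) σ =
      if ∀ t : Fin k, σ t = g ((univ.filter (fun u : Fin k => u < t)).image σ)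
      then 1 else 0 := by
  rw [seqProb]
  simp only [indPol]
  rw [Finset.prod_boole]
  simp

/-- The prefix image of a chain-following sequence equals the take-set. -/
lemma chain_aux {M k : ℕ} {l : List (Fin M)} (hlen : l.length = k)
    (g : Finset (Fin M) → Fin M) (d : Fin M) (σ : Fin k → Fin M)
    (n : ℕ) (hn : n ≤ k)
    (hg : ∀ m : ℕ, m < n → g ((l.take m).toFinset) = l.getD m d)
    (hσ : ∀ t : Fin k, (t : ℕ) < n →
      σ t = g ((univ.filter (fun u : Fin k => u < t)).image σ)) :
    (univ.filter (fun u : Fin k => (u : ℕ) < n)).image σ = (l.take n).toFinset := by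
  induction n with
  | zero => simp
  | succ n ih =>
    have hn' : n < k := by omega
    have h1 := ih (by omega) (fun m hm => hg m (by omega)) (fun t ht => hσ t (by omega))
    have hfil : (univ.filter (fun u : Fin k => (u : ℕ) < n + 1)) =
        insert (⟨n, hn'⟩ : Fin k) (univ.filter (fun u : Fin k => (u : ℕ) < n)) := by
      ext u
      simp [Fin.ext_iff, Nat.lt_succ_iff_lt_or_eq]
      omega
    have hpre : (univ.filter (fun u : Fin k => u < (⟨n, hn'⟩ : Fin k))).image σ =
        (l.take n).toFinset := by
      rw [show (univ.filter (fun u : Fin k => u < (⟨n, hn'⟩ : Fin k))) =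
        (univ.filter (fun u : Fin k => (u : ℕ) < n)) by ext u; simp [Fin.lt_def], h1]
    have hσn : σ ⟨n, hn'⟩ = l.getD n d := by
      rw [hσ ⟨n, hn'⟩ (by simp), hpre, hg n (by omega)]
    rw [hfil, Finset.image_insert, h1, hσn]
    have hm : n < l.length := by omega
    have h2 : l.take (n+1) = l.take n ++ [l[n]] := by
      rw [List.take_succ, List.getElem?_eq_getElem hm]; rfl
    have hs : ([l[n]] : List (Fin M)).toFinset = {l[n]} := by simp
    rw [h2, List.toFinset_append, List.getD_eq_getElem l d hm, hs,
      Finset.union_comm, ← Finset.insert_eq]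

/-- The prefix image of the canonical enumeration equals the take-set. -/
lemma imtake {M k : ℕ} {l : List (Fin M)} (hlen : l.length = k) (d : Fin M)
    (n : ℕ) (hn : n ≤ k) :
    (univ.filter (fun u : Fin k => (u : ℕ) < n)).image
      (fun u : Fin k => l.getD (u : ℕ) d) = (l.take n).toFinset := by
  induction n with
  | zero => simp
  | succ n ih =>
    have hn' : n < k := by omega
    have h1 := ih (by omega)
    have hfil : (univ.filter (fun u : Fin k => (u : ℕ) < n + 1)) =
        insert (⟨n, hn'⟩ : Fin k) (univ.filter (fun u : Fin k => (u : ℕ) < n)) := by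
      ext u
      simp [Fin.ext_iff, Nat.lt_succ_iff_lt_or_eq]
      omega
    have hm : n < l.length := by omega
    have h2 : l.take (n+1) = l.take n ++ [l[n]] := by
      rw [List.take_succ, List.getElem?_eq_getElem hm]; rfl
    rw [hfil, Finset.image_insert, h1, h2, List.toFinset_append]
    have hg : l.getD n d = l[n] := List.getD_eq_getElem l d hm
    have hs : ([l[n]] : List (Fin M)).toFinset = {l[n]} := by simp
    rw [hg, hs, Finset.union_comm, ← Finset.insert_eq]

lemma filter_lt_eq {k : ℕ} (t : Fin k) :
    (univ.filter (fun u : Fin k => u < t)) =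
    (univ.filter (fun u : Fin k => (u : ℕ) < (t : ℕ))) := by
  ext u
  simp only [Finset.mem_filter, Finset.mem_univ, true_and, Fin.lt_def]

/-- subset-query lower bound adversary. For any proper subset
`U ⊊ S_K`, there exist two set-sufficient policies that agree at every subset
other than `U` yet assign different unordered propensities to `S_K`; hence any
exact deterministic subset-oracle algorithm must query all `2^K − 1` proper
subsets of `S_K` in the worst case. -/
theorem stmt_13 {M K : ℕ} (hK : 0 < K) (hKM : K < M)
    (SK : Finset (Fin M)) (hSK : SK.card = K)
    (U : Finset (Fin M)) (hU : U ⊂ SK) :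
    ∃ μ₁ μ₂ : Finset (Fin M) → Fin M → ℝ,
      IsSetSufficientPolicy K μ₁ ∧ IsSetSufficientPolicy K μ₂ ∧
      (∀ S : Finset (Fin M), S ≠ U → ∀ a, μ₁ S a = μ₂ S a) ∧
      setProb μ₁ SK ≠ setProb μ₂ SK := by
  classical
  have hM : 0 < M := lt_trans hK hKM
  set d : Fin M := ⟨0, hM⟩ with hd
  -- an element outside SK
  obtain ⟨b, hb⟩ : ∃ b : Fin M, b ∉ SK := by
    by_contra h
    push_neg at h
    have : SK = univ := Finset.eq_univ_iff_forall.mpr h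
    rw [this] at hSK
    simp at hSK
    omega
  have hbU : b ∉ U := fun h => hb (hU.subset h)
  -- the list enumerating U then SK \ U
  set l : List (Fin M) := U.toList ++ (SK \ U).toList with hl
  have hUsub := hU.subset
  have hlen : l.length = K := by
    rw [hl]
    simp [Finset.length_toList, Finset.card_sdiff_of_subset hUsub]
    have := Finset.card_le_card hUsub
    omega
  have hnd : l.Nodup := by
    rw [hl]
    refine List.Nodup.append (Finset.nodup_toList U) (Finset.nodup_toList _) ?_
    intro a ha ha'
    rw [Finset.mem_toList] at ha ha'
    exact (Finset.mem_sdiff.mp ha').2 ha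
  have htf : l.toFinset = SK := by
    rw [hl, List.toFinset_append]
    simp [Finset.union_sdiff_of_subset hUsub]
  have hlK : l.length < M := by omega
  set j : ℕ := U.card with hj
  have hjK : j < K := by
    have := Finset.card_lt_card hU
    omega
  have htakej : (l.take j).toFinset = U := by
    have : l.take j = U.toList := by
      rw [hl, hj, ← Finset.length_toList U]
      exact List.take_left
    rw [this]
    exact Finset.toList_toFinset U
  -- the two next-item maps
  set g₁ : Finset (Fin M) → Fin M := nxt hM l with hg₁
  set g₂ : Finset (Fin M) → Fin M := fun S => if S = U then b else nxt hM l S with hg₂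
  refine ⟨indPol g₁, indPol g₂, ?_, ?_, ?_, ?_⟩
  · -- policy 1
    intro S hS
    refine ⟨fun a => by simp only [indPol]; positivity, ?_⟩
    simp only [indPol]
    rw [Finset.sum_ite_eq' Sᶜ (g₁ S) (fun _ => (1:ℝ))]
    rw [if_pos]
    simpa using nxt_not_mem hM hnd hlK S (by omega)
  · -- policy 2
    intro S hS
    refine ⟨fun a => by simp only [indPol]; positivity, ?_⟩
    simp only [indPol]
    rw [Finset.sum_ite_eq' Sᶜ (g₂ S) (fun _ => (1:ℝ))]
    rw [if_pos]
    rw [hg₂]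
    by_cases hSU : S = U
    · simp [hSU, hbU]
    · simp only [if_neg hSU, Finset.mem_compl]
      exact nxt_not_mem hM hnd hlK S (by omega)
  · -- agreement off U
    intro S hS a
    simp only [indPol, hg₂]
    simp [if_neg hS, hg₁]
  · -- different propensities
    have hkl : l.length = SK.card := by rw [hlen, hSK]
    -- facts about g₁ on take-sets
    have hg1take : ∀ m : ℕ, m < SK.card → g₁ ((l.take m).toFinset) = l.getD m d := by
      intro m hm
      rw [hg₁]
      exact nxt_take hM hnd (by omega)
    have hg2take : ∀ m : ℕ, m < j → g₂ ((l.take m).toFinset) = l.getD m d := by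
      intro m hm
      have hne : (l.take m).toFinset ≠ U := by
        intro h
        have := toFinset_take_card hnd (m := m) (by omega)
        rw [h] at this
        omega
      rw [hg₂]
      simp only [if_neg hne]
      exact nxt_take hM hnd (by omega)
    -- the canonical sequence
    set e : Fin SK.card → Fin M := fun u => l.getD (u : ℕ) d with he
    have hpref_e : ∀ t : Fin SK.card,
        (univ.filter (fun u : Fin SK.card => u < t)).image e = (l.take (t : ℕ)).toFinset := by
      intro t
      rw [filter_lt_eq t, imtake hkl d (t : ℕ) (le_of_lt t.isLt)]
    have hchain_e : ∀ t : Fin SK.card,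
        e t = g₁ ((univ.filter (fun u : Fin SK.card => u < t)).image e) := by
      intro t
      rw [hpref_e t, hg1take (t : ℕ) t.isLt]
    have him_e : (univ : Finset (Fin SK.card)).image e = SK := by
      have h1 : (univ : Finset (Fin SK.card)) =
          univ.filter (fun u : Fin SK.card => (u : ℕ) < SK.card) := by
        ext u; simp [u.isLt]
      rw [h1, imtake hkl d SK.card le_rfl]
      rw [← hkl, List.take_length, htf]
    -- setProb μ₁ = 1
    have hsp1 : setProb (indPol g₁) SK = 1 := by
      rw [setProb]
      rw [Finset.sum_eq_single_of_mem e (by simp [him_e])]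
      · rw [seqProb_indPol, if_pos hchain_e]
      · intro σ hσ hne
        rw [seqProb_indPol, if_neg]
        intro hch
        apply hne
        funext t
        have hpre : (univ.filter (fun u : Fin SK.card => u < t)).image σ =
            (l.take (t : ℕ)).toFinset := by
          rw [filter_lt_eq t]
          exact chain_aux hkl g₁ d σ (t : ℕ) (le_of_lt t.isLt)
            (fun m hm => hg1take m (by omega)) (fun s hs => hch s)
        rw [hch t, hpre, hg1take (t : ℕ) t.isLt]
    -- setProb μ₂ = 0
    have hsp2 : setProb (indPol g₂) SK = 0 := by
      rw [setProb]
      apply Finset.sum_eq_zero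
      intro σ hσ
      rw [Finset.mem_filter] at hσ
      rw [seqProb_indPol, if_neg]
      intro hch
      have hjlt : j < SK.card := by omega
      have hpre : (univ.filter (fun u : Fin SK.card => u < (⟨j, hjlt⟩ : Fin SK.card))).image σ =
          (l.take j).toFinset := by
        rw [filter_lt_eq]
        exact chain_aux hkl g₂ d σ j (by omega) hg2take (fun s hs => hch s)
      have hσj : σ ⟨j, hjlt⟩ = b := by
        rw [hch ⟨j, hjlt⟩, hpre, htakej, hg₂]
        simp
      have hmem : σ ⟨j, hjlt⟩ ∈ Finset.image σ univ :=
        Finset.mem_image_of_mem σ (Finset.mem_univ _)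
      rw [hσ.2, hσj] at hmem
      exact hb hmem
    rw [hsp1, hsp2]
    norm_num
end

section
/- Let Ω be a finite set, P_π ≪ P_β pmfs, q : Ω → Z, g : Z → ℝ. Then Var_β(w(q)g(q)) ≤ Var_β(ρ g(q)), where ρ = P_π/P_β (zero off supp P_β) and w(z) = F_π(z)/F_β(z) (zero when F_β(z)=0). Equality holds if and only if for P_β-almost every ω, ρ(ω) = w(q(ω)) on every fiber where g(q(ω)) ≠ 0. -/
open Finset

/-- Rao–Blackwell variance inequality for quotient weighting, with
the exact equality condition. -/
theorem stmt_15 {Ω Z : Type*} [Fintype Ω] [Fintype Z] [DecidableEq Z]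
    (Pπ Pβ : Ω → ℝ)
    (hπ0 : ∀ ω, 0 ≤ Pπ ω) (hβ0 : ∀ ω, 0 ≤ Pβ ω)
    (hπ1 : ∑ ω, Pπ ω = 1) (hβ1 : ∑ ω, Pβ ω = 1)
    (hac : ∀ ω, Pβ ω = 0 → Pπ ω = 0)
    (q : Ω → Z) (g : Z → ℝ)
    (Fπ Fβ : Z → ℝ)
    (hFπ : ∀ z, Fπ z = ∑ ω ∈ univ.filter (fun ω => q ω = z), Pπ ω)
    (hFβ : ∀ z, Fβ z = ∑ ω ∈ univ.filter (fun ω => q ω = z), Pβ ω)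
    (ρ : Ω → ℝ)
    (hρ : ∀ ω, ρ ω = if Pβ ω = 0 then 0 else Pπ ω / Pβ ω)
    (w : Z → ℝ)
    (hw : ∀ z, w z = if Fβ z = 0 then 0 else Fπ z / Fβ z)
    (E : (Ω → ℝ) → ℝ) (hE : ∀ f, E f = ∑ ω, Pβ ω * f ω)
    (V : (Ω → ℝ) → ℝ) (hV : ∀ f, V f = E (fun ω => (f ω - E f) ^ 2)) :
    V (fun ω => w (q ω) * g (q ω)) ≤ V (fun ω => ρ ω * g (q ω)) ∧
    (V (fun ω => w (q ω) * g (q ω)) = V (fun ω => ρ ω * g (q ω)) ↔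
      ∀ ω, 0 < Pβ ω → g (q ω) ≠ 0 → ρ ω = w (q ω)) := by
  have hβρ : ∀ ω, Pβ ω * ρ ω = Pπ ω := by
    intro ω; rw [hρ]
    by_cases h : Pβ ω = 0
    · simp [h, hac ω h]
    · rw [if_neg h]; field_simp
  have hFβπ : ∀ z, Fβ z = 0 → Fπ z = 0 := by
    intro z hz
    rw [hFπ]
    apply Finset.sum_eq_zero
    intro ω hω
    exact hac ω ((Finset.sum_eq_zero_iff_of_nonneg (fun ω _ => hβ0 ω)).mp
      (by rw [← hFβ]; exact hz) ω hω)
  have hfiber : ∀ z, ∑ ω ∈ univ.filter (fun ω => q ω = z), Pβ ω * (ρ ω - w z) = 0 := by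
    intro z
    have h1 : ∑ ω ∈ univ.filter (fun ω => q ω = z), Pβ ω * (ρ ω - w z)
        = Fπ z - w z * Fβ z := by
      rw [hFπ, hFβ, Finset.mul_sum, ← Finset.sum_sub_distrib]
      refine Finset.sum_congr rfl fun ω _ => ?_
      rw [← hβρ ω]; ring
    rw [h1, hw]
    by_cases h : Fβ z = 0
    · simp [h, hFβπ z h]
    · rw [if_neg h]; field_simp; ring
  have key : ∀ h : Z → ℝ, ∑ ω, Pβ ω * (ρ ω - w (q ω)) * h (q ω) = 0 := by
    intro h
    rw [← Finset.sum_fiberwise univ q (fun ω => Pβ ω * (ρ ω - w (q ω)) * h (q ω))]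
    apply Finset.sum_eq_zero
    intro z _
    have h2 : ∑ ω ∈ univ.filter (fun ω => q ω = z), Pβ ω * (ρ ω - w (q ω)) * h (q ω)
        = (∑ ω ∈ univ.filter (fun ω => q ω = z), Pβ ω * (ρ ω - w z)) * h z := by
      rw [Finset.sum_mul]
      refine Finset.sum_congr rfl fun ω hω => ?_
      rw [Finset.mem_filter] at hω
      rw [hω.2]
    rw [h2, hfiber z, zero_mul]
  have hmean : E (fun ω => ρ ω * g (q ω)) = E (fun ω => w (q ω) * g (q ω)) := by
    rw [hE, hE, ← sub_eq_zero, ← Finset.sum_sub_distrib, ← key g]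
    refine Finset.sum_congr rfl fun ω _ => ?_; ring
  set m := E (fun ω => w (q ω) * g (q ω)) with hm
  have hdiff : V (fun ω => ρ ω * g (q ω)) = V (fun ω => w (q ω) * g (q ω))
      + ∑ ω, Pβ ω * ((ρ ω - w (q ω)) * g (q ω)) ^ 2 := by
    rw [hV, hV, hmean, ← hm, hE, hE]
    have cross := key (fun z => 2 * (w z * g z - m) * g z)
    calc ∑ ω, Pβ ω * (ρ ω * g (q ω) - m) ^ 2
        = ∑ ω, (Pβ ω * (w (q ω) * g (q ω) - m) ^ 2
          + Pβ ω * ((ρ ω - w (q ω)) * g (q ω)) ^ 2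
          + Pβ ω * (ρ ω - w (q ω)) * (2 * (w (q ω) * g (q ω) - m) * g (q ω))) :=
          Finset.sum_congr rfl (fun ω _ => by ring)
      _ = _ := by
          rw [Finset.sum_add_distrib, Finset.sum_add_distrib, cross, add_zero]
  have hterm : ∀ ω ∈ Finset.univ, (0:ℝ) ≤ Pβ ω * ((ρ ω - w (q ω)) * g (q ω)) ^ 2 :=
    fun ω _ => mul_nonneg (hβ0 ω) (sq_nonneg _)
  have hsum0 : 0 ≤ ∑ ω, Pβ ω * ((ρ ω - w (q ω)) * g (q ω)) ^ 2 :=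
    Finset.sum_nonneg hterm
  constructor
  · rw [hdiff]; linarith
  · rw [hdiff]
    constructor
    · intro heq
      have hs : ∑ ω, Pβ ω * ((ρ ω - w (q ω)) * g (q ω)) ^ 2 = 0 := by linarith
      have := (Finset.sum_eq_zero_iff_of_nonneg hterm).mp hs
      intro ω hβ hg
      have h0 := this ω (Finset.mem_univ ω)
      rcases mul_eq_zero.mp h0 with h | h
      · exact absurd h (ne_of_gt hβ)
      · have := pow_eq_zero_iff (n := 2) (by norm_num) |>.mp h
        rcases mul_eq_zero.mp this with h' | h'
        · linarith [sub_eq_zero.mp h']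
        · exact absurd h' hg
    · intro hcond
      have hs : ∑ ω, Pβ ω * ((ρ ω - w (q ω)) * g (q ω)) ^ 2 = 0 := by
        apply Finset.sum_eq_zero
        intro ω _
        rcases eq_or_lt_of_le (hβ0 ω) with h | h
        · rw [← h, zero_mul]
        · by_cases hg : g (q ω) = 0
          · simp [hg]
          · rw [hcond ω h hg]; ring
      rw [hs, add_zero]
end

section
/- Per-term Rao–Blackwell for forward-flow IS: With the sufficient-quotient setup (histories ω, quotient z, actions a drawn from β(·|z), bounded reward r(z,a)), define X = ρ_hist(ω)·ρ_act(z,a)·r(z,a) where ρ_hist = P_π/P_β, and Y = (F_π(z)/F_β(z))·ρ_act(z,a)·r(z,a). Then Y = E_β[X | z, a] (using that the conditional law of ω given z is unchanged by further conditioning on a, since a depends on ω only through z), and hence Var_β(Y) ≤ Var_β(X) with E_β(Y)=E_β(X). -/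
open Finset

/-- per-term Rao–Blackwell property of forward-flow IS. The
forward-flow summand `Y` is the conditional expectation of the per-decision
summand `X` given `(z, a)`; hence they share the same mean and
`Var_β(Y) ≤ Var_β(X)`. -/
theorem stmt_18 {Ω Z A : Type*} [Fintype Ω] [Fintype Z] [Fintype A]
    [DecidableEq Z] [DecidableEq A]
    (Pπ Pβ : Ω → ℝ)
    (hπ0 : ∀ ω, 0 ≤ Pπ ω) (hβ0 : ∀ ω, 0 ≤ Pβ ω)
    (hπ1 : ∑ ω, Pπ ω = 1) (hβ1 : ∑ ω, Pβ ω = 1)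
    (hac : ∀ ω, Pβ ω = 0 → Pπ ω = 0)
    (zm : Ω → Z)
    (π β : Z → A → ℝ)
    (hπk0 : ∀ z a, 0 ≤ π z a) (hβk0 : ∀ z a, 0 ≤ β z a)
    (hπk1 : ∀ z, ∑ a, π z a = 1) (hβk1 : ∀ z, ∑ a, β z a = 1)
    (Fπ Fβ : Z → ℝ)
    (hFπ : ∀ z, Fπ z = ∑ ω ∈ univ.filter (fun ω => zm ω = z), Pπ ω)
    (hFβ : ∀ z, Fβ z = ∑ ω ∈ univ.filter (fun ω => zm ω = z), Pβ ω)
    (hack : ∀ z, 0 < Fπ z → ∀ a, β z a = 0 → π z a = 0)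
    (r : Z → A → ℝ)
    -- joint pmf of (history, action) under the behavior policy
    (Pj : Ω × A → ℝ) (hPj : ∀ p, Pj p = Pβ p.1 * β (zm p.1) p.2)
    (ρhist : Ω → ℝ)
    (hρhist : ∀ ω, ρhist ω = if Pβ ω = 0 then 0 else Pπ ω / Pβ ω)
    (ρact : Z → A → ℝ)
    (hρact : ∀ z a, ρact z a = if β z a = 0 then 0 else π z a / β z a)
    (w : Z → ℝ)
    (hw : ∀ z, w z = if Fβ z = 0 then 0 else Fπ z / Fβ z)
    (X Y : Ω × A → ℝ)
    (hX : ∀ p, X p = ρhist p.1 * ρact (zm p.1) p.2 * r (zm p.1) p.2)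
    (hY : ∀ p, Y p = w (zm p.1) * ρact (zm p.1) p.2 * r (zm p.1) p.2)
    -- expectation and variance under the joint behavior pmf
    (E : (Ω × A → ℝ) → ℝ) (hE : ∀ f, E f = ∑ p, Pj p * f p)
    (V : (Ω × A → ℝ) → ℝ) (hV : ∀ f, V f = E (fun p => (f p - E f) ^ 2)) :
    (∀ p : Ω × A, 0 < Pj p →
      Y p =
        (∑ p' ∈ univ.filter (fun p' : Ω × A => zm p'.1 = zm p.1 ∧ p'.2 = p.2),
            Pj p' * X p') /
          (∑ p' ∈ univ.filter (fun p' : Ω × A => zm p'.1 = zm p.1 ∧ p'.2 = p.2),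
            Pj p')) ∧
    E Y = E X ∧ V Y ≤ V X := by
  classical
  -- fiber sums
  have lemA : ∀ z, ∑ ω ∈ univ.filter (fun ω => zm ω = z), Pβ ω * ρhist ω = Fπ z := by
    intro z
    rw [hFπ]
    refine Finset.sum_congr rfl fun ω _ => ?_
    rw [hρhist]
    by_cases h : Pβ ω = 0
    · simp [h, hac ω h]
    · rw [if_neg h]; field_simp
  have lemB : ∀ z, Fβ z * w z = Fπ z := by
    intro z
    rw [hw]
    by_cases h : Fβ z = 0
    · rw [if_pos h, mul_zero, hFπ]
      symm
      refine Finset.sum_eq_zero fun ω hω => ?_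
      have h0 : ∀ ω ∈ univ.filter (fun ω => zm ω = z), Pβ ω = 0 := by
        have := (Finset.sum_eq_zero_iff_of_nonneg (fun ω _ => hβ0 ω)).mp ((hFβ z).symm.trans h)
        exact this
      exact hac ω (h0 ω hω)
    · rw [if_neg h]; field_simp
  have lemFβ : ∀ z, ∑ ω ∈ univ.filter (fun ω => zm ω = z), Pβ ω = Fβ z :=
    fun z => (hFβ z).symm
  -- key cross lemma
  have key : ∀ g : Z → A → ℝ,
      ∑ p : Ω × A, Pj p * (g (zm p.1) p.2 * (X p - Y p)) = 0 := by
    intro g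
    have hsplit : ∑ p : Ω × A, Pj p * (g (zm p.1) p.2 * (X p - Y p))
        = ∑ ω, Pβ ω * (ρhist ω - w (zm ω)) *
            (∑ a, β (zm ω) a * (g (zm ω) a * (ρact (zm ω) a * r (zm ω) a))) := by
      rw [Fintype.sum_prod_type]
      refine Finset.sum_congr rfl fun ω _ => ?_
      rw [Finset.mul_sum]
      refine Finset.sum_congr rfl fun a _ => ?_
      rw [hPj, hX, hY]
      ring
    rw [hsplit]
    set K : Z → ℝ := fun z => ∑ a, β z a * (g z a * (ρact z a * r z a)) with hK
    rw [← Finset.sum_fiberwise_of_maps_to (g := zm) (fun ω _ => Finset.mem_univ (zm ω))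
      (fun ω => Pβ ω * (ρhist ω - w (zm ω)) * K (zm ω))]
    refine Finset.sum_eq_zero fun z _ => ?_
    have : ∑ ω ∈ univ.filter (fun ω => zm ω = z),
        Pβ ω * (ρhist ω - w (zm ω)) * K (zm ω)
        = ∑ ω ∈ univ.filter (fun ω => zm ω = z),
          (Pβ ω * ρhist ω * K z - Pβ ω * (w z * K z)) := by
      refine Finset.sum_congr rfl fun ω hω => ?_
      have hz : zm ω = z := (Finset.mem_filter.mp hω).2
      rw [hz]; ring
    rw [this, Finset.sum_sub_distrib, ← Finset.sum_mul, lemA, ← Finset.sum_mul, lemFβ]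
    linear_combination (-(K z)) * lemB z
  -- total mass 1
  have hmass : ∑ p : Ω × A, Pj p = 1 := by
    rw [Fintype.sum_prod_type]
    have : ∀ ω : Ω, ∑ a, Pj (ω, a) = Pβ ω := by
      intro ω
      simp only [hPj]
      rw [← Finset.mul_sum, hβk1, mul_one]
    rw [Finset.sum_congr rfl fun ω _ => this ω, hβ1]
  -- equal means
  have hEXY : E X = E Y := by
    have := key (fun _ _ => 1)
    simp only [one_mul] at this
    rw [hE, hE, ← sub_eq_zero, ← Finset.sum_sub_distrib]
    rw [← this]
    refine Finset.sum_congr rfl fun p _ => ?_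
    ring
  -- cross term zero
  have hcross : ∑ p : Ω × A, Pj p * ((Y p - E Y) * (X p - Y p)) = 0 := by
    have := key (fun z a => w z * ρact z a * r z a - E Y)
    rw [← this]
    refine Finset.sum_congr rfl fun p _ => ?_
    rw [hY p]
  -- variance decomposition
  have hVdec : V X = V Y + ∑ p : Ω × A, Pj p * (X p - Y p) ^ 2 := by
    have hVX : V X = ∑ p : Ω × A, Pj p * (X p - E Y) ^ 2 := by
      rw [hV, hE, hEXY]
    have hVY : V Y = ∑ p : Ω × A, Pj p * (Y p - E Y) ^ 2 := by
      rw [hV, hE]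
    rw [hVX, hVY]
    have expand : ∀ p : Ω × A, Pj p * (X p - E Y) ^ 2
        = Pj p * (Y p - E Y) ^ 2 + Pj p * (X p - Y p) ^ 2
          + 2 * (Pj p * ((Y p - E Y) * (X p - Y p))) := by
      intro p; ring
    rw [Finset.sum_congr rfl fun p _ => expand p]
    rw [Finset.sum_add_distrib, Finset.sum_add_distrib, ← Finset.mul_sum, hcross]
    ring
  refine ⟨?_, hEXY.symm, ?_⟩
  · -- conditional expectation formula
    rintro ⟨ω₀, a₀⟩ hpos
    have hPβ : 0 < Pβ ω₀ := by
      rcases lt_or_eq_of_le (hβ0 ω₀) with h | h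
      · exact h
      · exfalso; rw [hPj] at hpos; rw [← h, zero_mul] at hpos; exact lt_irrefl 0 hpos
    have hβa : 0 < β (zm ω₀) a₀ := by
      rcases lt_or_eq_of_le (hβk0 (zm ω₀) a₀) with h | h
      · exact h
      · exfalso; rw [hPj] at hpos; rw [← h, mul_zero] at hpos; exact lt_irrefl 0 hpos
    have hFβpos : 0 < Fβ (zm ω₀) := by
      rw [hFβ]
      refine lt_of_lt_of_le hPβ (Finset.single_le_sum (fun ω _ => hβ0 ω) ?_)
      simp
    set z₀ := zm ω₀
    have hfib : ∀ f : Ω × A → ℝ,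
        ∑ p' ∈ univ.filter (fun p' : Ω × A => zm p'.1 = z₀ ∧ p'.2 = a₀), f p'
          = ∑ ω ∈ univ.filter (fun ω => zm ω = z₀), f (ω, a₀) := by
      intro f
      rw [Finset.sum_filter, Finset.sum_filter, Fintype.sum_prod_type]
      refine Finset.sum_congr rfl fun ω _ => ?_
      by_cases hz : zm ω = z₀
      · simp [hz]
      · simp [hz]
    have hden : ∑ p' ∈ univ.filter (fun p' : Ω × A => zm p'.1 = z₀ ∧ p'.2 = a₀), Pj p'
        = Fβ z₀ * β z₀ a₀ := by
      rw [hfib]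
      have : ∀ ω ∈ univ.filter (fun ω => zm ω = z₀), Pj (ω, a₀) = Pβ ω * β z₀ a₀ := by
        intro ω hω
        rw [hPj]
        simp only
        rw [(Finset.mem_filter.mp hω).2]
      rw [Finset.sum_congr rfl this, ← Finset.sum_mul, lemFβ]
    have hnum : ∑ p' ∈ univ.filter (fun p' : Ω × A => zm p'.1 = z₀ ∧ p'.2 = a₀),
        Pj p' * X p' = Fπ z₀ * β z₀ a₀ * (ρact z₀ a₀ * r z₀ a₀) := by
      rw [hfib]
      have : ∀ ω ∈ univ.filter (fun ω => zm ω = z₀), Pj (ω, a₀) * X (ω, a₀)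
          = Pβ ω * ρhist ω * (β z₀ a₀ * (ρact z₀ a₀ * r z₀ a₀)) := by
        intro ω hω
        rw [hPj, hX]
        simp only
        rw [(Finset.mem_filter.mp hω).2]
        ring
      rw [Finset.sum_congr rfl this, ← Finset.sum_mul, lemA]
      ring
    rw [hnum, hden, hY]
    simp only
    rw [hw, if_neg (ne_of_gt hFβpos)]
    field_simp
    change Fπ z₀ * ρact z₀ a₀ * r z₀ a₀ * Fβ z₀ * (Fβ z₀)⁻¹ = Fπ z₀ * ρact z₀ a₀ * r z₀ a₀
    rw [mul_assoc _ (Fβ z₀), mul_inv_cancel₀ (ne_of_gt hFβpos), mul_one]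
  · -- variance inequality
    rw [hVdec]
    have : 0 ≤ ∑ p : Ω × A, Pj p * (X p - Y p) ^ 2 := by
      refine Finset.sum_nonneg fun p _ => mul_nonneg ?_ (sq_nonneg _)
      rw [hPj]; exact mul_nonneg (hβ0 _) (hβk0 _ _)
    linarith
end
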